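/- Let ε = 3.63×10⁻³ and Δ = 2⁻¹². For every x ∈ [−5, 5], if ẽ > 0 satisfies |ẽ − exp(−x)| ≤ ε·exp(−x), σ̃ = 1/(1 + ẽ) + δ_div with |δ_div| ≤ Δ, and f̃ = x·σ̃, then |f̃ − x/(1 + exp(−x))| ≤ 0.038. -/

import Mathlib

/-- Numerical corollary of the NLS-SiLU error bound for the recommended configuration
`ε = 3.63e-3`, `Δ = 2⁻¹²`: for all `x ∈ [-5,5]`, the approximation error is at most
`0.038`. -/
theorem nls_silu_numerical_bound
    (x : ℝ) (hx : x ∈ Set.Icc (-5 : ℝ) 5)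
    (etil : ℝ) (hpos : 0 < etil)
    (he : |etil - Real.exp (-x)| ≤ (3.63e-3 : ℝ) * Real.exp (-x))
    (δdiv : ℝ) (hδ : |δdiv| ≤ (2 : ℝ) ^ (-12 : ℤ))
    (σtil : ℝ) (hσ : σtil = 1 / (1 + etil) + δdiv)
    (ftil : ℝ) (hf : ftil = x * σtil) :
    |ftil - x / (1 + Real.exp (-x))| ≤ 0.038 := by
  obtain ⟨hx1, hx2⟩ := hx
  have hxabs : |x| ≤ 5 := abs_le.mpr ⟨hx1, hx2⟩
  set e := Real.exp (-x) with hE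
  have hepos : 0 < e := Real.exp_pos _
  have h1e : 0 < 1 + e := by linarith
  have h1t : 0 < 1 + etil := by linarith
  have key : |1 / (1 + etil) - 1 / (1 + e)| ≤ 3.63e-3 := by
    have heq : 1 / (1 + etil) - 1 / (1 + e) = (e - etil) / ((1 + etil) * (1 + e)) := by
      field_simp
      ring
    rw [heq, abs_div, abs_of_pos (mul_pos h1t h1e), div_le_iff₀ (mul_pos h1t h1e)]
    have h1 : |e - etil| ≤ 3.63e-3 * e := by rw [abs_sub_comm]; exact he
    nlinarith [abs_nonneg (e - etil), mul_pos hpos hepos]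
  have hΔ : ((2 : ℝ) ^ (-12 : ℤ)) = 1 / 4096 := by norm_num
  have hδ' : |δdiv| ≤ 1 / 4096 := hΔ ▸ hδ
  have habs : |ftil - x / (1 + e)| = |x| * |(1 / (1 + etil) - 1 / (1 + e)) + δdiv| := by
    rw [hf, hσ, ← abs_mul]
    congr 1
    ring
  rw [habs]
  have h3 : |(1 / (1 + etil) - 1 / (1 + e)) + δdiv| ≤ 3.63e-3 + 1 / 4096 :=
    le_trans (abs_add_le _ _) (add_le_add key hδ')
  calc |x| * |(1 / (1 + etil) - 1 / (1 + e)) + δdiv|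
      ≤ 5 * (3.63e-3 + 1 / 4096) :=
        mul_le_mul hxabs h3 (abs_nonneg _) (by norm_num)
    _ ≤ 0.038 := by norm_num
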